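/- Let α : X → Set(Σ_τ × 𝒟X) be a finitary simple Segala system and let β be its derived CM-coalgebra on Σ_τ × X. If x ⇝^σ μ for σ ∈ Σ_τ, then (τ,x) ⇒_β ⟨σ,μ⟩. Moreover, if x ⇝^τ μ, then (σ,x) ⇒_β ⟨σ,μ⟩ for every σ ∈ Σ_τ. -/
import Mathlib


open scoped NNReal Pointwise

/-- `M Y`: finitely supported functions `Y →₀ ℝ≥0`. -/
abbrev M (Y : Type*) : Type _ := Y →₀ ℝ≥0

/-- `𝒟 X`: finitely supported probability distributions on `X`. -/
def PDist (X : Type*) : Type _ := {μ : M X // μ.sum (fun _ r => r) = 1}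

/-- The Dirac distribution `δ_x`. -/
noncomputable def dirac {X : Type*} (x : X) : PDist X :=
  ⟨Finsupp.single x 1, by simp⟩

/-- `⟨σ,μ⟩ ∈ M(Σ_τ × X)`: the element with `⟨σ,μ⟩(σ',x') = μ(x')` if `σ' = σ` and `0`
otherwise. Labels: `none` is the silent label τ. -/
noncomputable def emb {X A : Type*} (σ : Option A) (μ : PDist X) : M (Option A × X) :=
  Finsupp.mapDomain (fun x => (σ, x)) μ.1

/-- The `CM`-structure `ᾱ` derived from a finitary simple Segala system `α`:
`ᾱ(x) = {p₁•⟨σ₁,μ₁⟩ + … + pₙ•⟨σₙ,μₙ⟩ | n ≥ 0, Σpᵢ ≤ 1, x →^{σᵢ} μᵢ}`. -/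
noncomputable def abar {X A : Type*} (α : X → Set (Option A × PDist X)) (x : X) :
    Set (M (Option A × X)) :=
  {ψ | ∃ (n : ℕ) (p : Fin n → ℝ≥0) (c : Fin n → Option A × PDist X),
    (∑ i, p i) ≤ 1 ∧ (∀ i, c i ∈ α x) ∧ ψ = ∑ i, p i • emb (c i).1 (c i).2}

/-- The derived coalgebra `β` on `Σ_τ × X`. -/
noncomputable def beta {X A : Type*} (α : X → Set (Option A × PDist X)) :
    Option A × X → Set (M (Option A × X))
  | (none, x) => abar α x
  | (some a, x) =>
    {ψ | (∀ (σ' : Option A) (x' : X), σ' ≠ some a → ψ (σ', x') = 0) ∧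
      ∃ φ : M (Option A × X), (∀ x' : X, φ (none, x') = 0) ∧
        Finsupp.mapDomain (fun s : Option A × X => ((none : Option A), s.2)) ψ + φ ∈ abar α x}

/-- The inductively defined relation `s ⇒ⁿ_β ψ` for a `CM`-coalgebra `β`. -/
inductive Steps {S : Type*} (β : S → Set (M S)) : ℕ → S → M S → Prop
  | zero (s : S) : Steps β 0 s (Finsupp.single s 1)
  | succ {n : ℕ} {s : S} (φ : M S) (hφ : φ ∈ β s) (ψ : S → M S)
      (hψ : ∀ t ∈ φ.support, Steps β n t (ψ t)) {ψ' : M S} (hψ' : Steps β n s ψ')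
      (p : ℝ≥0) (hp : p ≤ 1) :
      Steps β (n + 1) s (p • (∑ t ∈ φ.support, φ t • ψ t) + (1 - p) • ψ')

/-- The weak combined arrows `x ⇝ₙ^σ μ` of a finitary simple Segala system. -/
inductive WArrow {X A : Type*} (α : X → Set (Option A × PDist X)) :
    ℕ → Option A → X → PDist X → Prop
  | zero (x : X) : WArrow α 0 none x (dirac x)
  | succ {n : ℕ} {σ : Option A} {x : X} {μ : PDist X}
      (m : ℕ) (q : Fin m → ℝ≥0) (c : Fin m → Option A × PDist X)
      (hq : ∑ i, q i = 1) (hc : ∀ i, c i ∈ α x)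
      (ν : M (Option A × X)) (hν : ν = ∑ i, q i • emb (c i).1 (c i).2)
      (hlab : ∀ (σ' : Option A) (x' : X), σ' ≠ σ → σ' ≠ none → ν (σ', x') = 0)
      (κ : Option A × X → PDist X)
      (hκ₁ : ∀ s ∈ ν.support, s.1 = σ → WArrow α n none s.2 (κ s))
      (hκ₂ : ∀ s ∈ ν.support, s.1 = none → WArrow α n σ s.2 (κ s))
      (hμ : μ.1 = ∑ s ∈ ν.support, ν s • (κ s).1) :
      WArrow α (n + 1) σ x μ

section Aux

open Finsupp

variable {S : Type*} {β : S → Set (M S)}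

lemma steps_pad (h0 : ∀ s, (0 : M S) ∈ β s) {n : ℕ} {s : S} {ψ : M S}
    (h : Steps β n s ψ) : Steps β (n + 1) s ψ := by
  have := Steps.succ (0 : M S) (h0 s) (fun _ => 0)
    (fun t ht => absurd ht (by simp)) h 0 zero_le_one
  simpa using this

lemma steps_mono (h0 : ∀ s, (0 : M S) ∈ β s) {n m : ℕ} {s : S} {ψ : M S}
    (hnm : n ≤ m) (h : Steps β n s ψ) : Steps β m s ψ := by
  induction hnm with
  | refl => exact h
  | step _ ih => exact steps_pad h0 ih

lemma steps_one (h0 : ∀ s, (0 : M S) ∈ β s) {n : ℕ} {s : S} (φ : M S) (hφ : φ ∈ β s)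
    (ψ : S → M S) (hψ : ∀ t ∈ φ.support, Steps β n t (ψ t)) :
    Steps β (n + 1) s (∑ t ∈ φ.support, φ t • ψ t) := by
  have hz : Steps β n s (Finsupp.single s 1) := steps_mono h0 (Nat.zero_le n) (Steps.zero s)
  have := Steps.succ φ hφ ψ hψ hz 1 le_rfl
  simpa using this

lemma steps_uniform (h0 : ∀ s, (0 : M S) ∈ β s) (T : Finset S) (ψ : S → M S)
    (H : ∀ t ∈ T, ∃ m, Steps β m t (ψ t)) : ∃ m, ∀ t ∈ T, Steps β m t (ψ t) := by
  classical
  refine ⟨T.sup (fun t => if h : ∃ m, Steps β m t (ψ t) then h.choose else 0), fun t ht => ?_⟩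
  have h := H t ht
  have h1 : Steps β (if h : ∃ m, Steps β m t (ψ t) then h.choose else 0) t (ψ t) := by
    rw [dif_pos h]; exact h.choose_spec
  exact steps_mono h0 (Finset.le_sup ht) h1

lemma zero_mem_abar {X A : Type*} (α : X → Set (Option A × PDist X)) (x : X) :
    (0 : M (Option A × X)) ∈ abar α x :=
  ⟨0, fun i => i.elim0, fun i => i.elim0, by simp, fun i => i.elim0, by simp⟩

lemma zero_mem_beta {X A : Type*} (α : X → Set (Option A × PDist X)) (s : Option A × X) :
    (0 : M (Option A × X)) ∈ beta α s := by
  obtain ⟨σ, x⟩ := s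
  cases σ with
  | none => exact zero_mem_abar α x
  | some a =>
    refine ⟨fun σ' x' _ => rfl, 0, fun _ => rfl, ?_⟩
    simpa using zero_mem_abar α x

lemma emb_sum {X A : Type*} (σ : Option A) (μ : PDist X) (T : Finset (Option A × X))
    (w : Option A × X → ℝ≥0) (κ : Option A × X → PDist X)
    (hμ : μ.1 = ∑ s ∈ T, w s • (κ s).1) :
    emb σ μ = ∑ s ∈ T, w s • emb σ (κ s) := by
  unfold emb
  rw [hμ, Finsupp.mapDomain_finset_sum]
  exact Finset.sum_congr rfl fun s _ => Finsupp.mapDomain_smul _ _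

lemma mapDomain_eq_self {Y : Type*} (f : Y → Y) (ν : Y →₀ ℝ≥0)
    (h : ∀ s ∈ ν.support, f s = s) : Finsupp.mapDomain f ν = ν := by
  rw [Finsupp.mapDomain_congr (g := id) h, Finsupp.mapDomain_id]

lemma main_ind {X A : Type*} (α : X → Set (Option A × PDist X)) : ∀ n : ℕ,
    (∀ (σ : Option A) (x : X) (μ : PDist X), WArrow α n σ x μ →
      ∃ m, Steps (beta α) m ((none : Option A), x) (emb σ μ)) ∧
    (∀ (x : X) (μ : PDist X), WArrow α n (none : Option A) x μ →
      ∀ σ : Option A, ∃ m, Steps (beta α) m (σ, x) (emb σ μ)) := by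
  classical
  have h0 := zero_mem_beta α
  intro n
  induction n with
  | zero =>
    constructor
    · rintro σ x μ h
      cases h
      refine ⟨0, ?_⟩
      have hz := Steps.zero (β := beta α) (((none : Option A), x))
      simpa [emb, dirac, Finsupp.mapDomain_single] using hz
    · rintro x μ h σ
      cases h
      refine ⟨0, ?_⟩
      have hz := Steps.zero (β := beta α) ((σ, x))
      simpa [emb, dirac, Finsupp.mapDomain_single] using hz
  | succ n ih =>
    obtain ⟨ih1, ih2⟩ := ih
    constructor
    · rintro σ x μ h
      cases h with
      | succ m q c hq hc ν hν hlab κ hκ₁ hκ₂ hμ =>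
        have hsupp : ∀ t ∈ ν.support, ∃ k, Steps (beta α) k t (emb σ (κ t)) := by
          intro t ht
          obtain ⟨t1, t2⟩ := t
          by_cases h1 : t1 = σ
          · subst h1
            exact ih2 _ _ (hκ₁ _ ht rfl) _
          · have h2 : t1 = none := by
              by_contra h2
              exact absurd (hlab t1 t2 h1 h2) (Finsupp.mem_support_iff.mp ht)
            subst h2
            exact ih1 _ _ _ (hκ₂ _ ht rfl)
        obtain ⟨k, hk⟩ := steps_uniform h0 ν.support (fun t => emb σ (κ t)) hsupp
        refine ⟨k + 1, ?_⟩
        have hmem : ν ∈ beta α ((none : Option A), x) := ⟨m, q, c, hq.le, hc, hν⟩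
        rw [emb_sum σ μ ν.support ν κ hμ]
        exact steps_one h0 ν hmem _ hk
    · rintro x μ h σ
      cases h with
      | succ m q c hq hc ν hν hlab κ hκ₁ hκ₂ hμ =>
        have hfst : ∀ s ∈ ν.support, s.1 = (none : Option A) := by
          intro s hs
          by_contra h1
          have := hlab s.1 s.2 h1 h1
          rw [Prod.mk.eta] at this
          exact absurd this (Finsupp.mem_support_iff.mp hs)
        have hid : Finsupp.mapDomain (fun s : Option A × X => ((none : Option A), s.2)) ν = ν := by
          apply mapDomain_eq_self
          intro s hs
          rw [← hfst s hs]
        set ν' : M (Option A × X) :=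
          Finsupp.mapDomain (fun s : Option A × X => (σ, s.2)) ν with hν'
        have hmem : ν' ∈ beta α (σ, x) := by
          cases σ with
          | none =>
            have hee : ν' = ν := hid
            rw [hee]
            exact ⟨m, q, c, hq.le, hc, hν⟩
          | some a =>
            refine ⟨?_, 0, fun _ => rfl, ?_⟩
            · intro σ' x' hne
              rw [hν']
              apply Finsupp.mapDomain_notin_range
              rintro ⟨s, hs⟩
              have : (some a : Option A) = σ' := congrArg Prod.fst hs
              exact hne this.symm
            · have hcomp : Finsupp.mapDomain
                  (fun s : Option A × X => ((none : Option A), s.2)) ν' + 0 = ν := by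
                rw [hν', ← Finsupp.mapDomain_comp, add_zero]
                exact hid
              rw [hcomp]
              exact ⟨m, q, c, hq.le, hc, hν⟩
        have hsupp : ∀ t ∈ ν'.support,
            ∃ k, Steps (beta α) k t (emb σ (κ ((none : Option A), t.2))) := by
          intro t ht
          have ht' := Finsupp.mapDomain_support ht
          obtain ⟨s, hs, rfl⟩ := Finset.mem_image.mp ht'
          have hs1 : s.1 = none := hfst s hs
          have hw : WArrow α n none s.2 (κ s) := hκ₁ s hs hs1
          show ∃ k, Steps (beta α) k (σ, s.2) (emb σ (κ ((none : Option A), s.2)))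
          have hκeq : κ ((none : Option A), s.2) = κ s := by rw [← hs1, Prod.mk.eta]
          rw [hκeq]
          exact ih2 s.2 (κ s) hw σ
        obtain ⟨k, hk⟩ := steps_uniform h0 ν'.support
          (fun t => emb σ (κ ((none : Option A), t.2))) hsupp
        refine ⟨k + 1, ?_⟩
        have hinj : Set.InjOn (fun s : Option A × X => (σ, s.2)) ↑ν.support := by
          intro s hs t ht hst
          have h2 : s.2 = t.2 := by simpa using congrArg Prod.snd hst
          have h1 : s.1 = t.1 := by rw [hfst s hs, hfst t ht]
          exact Prod.ext h1 h2
        have hsupport : ν'.support = ν.support.image (fun s : Option A × X => (σ, s.2)) :=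
          Finsupp.mapDomain_support_of_injOn ν hinj
        have hsum : emb σ μ = ∑ t ∈ ν'.support, ν' t • emb σ (κ ((none : Option A), t.2)) := by
          rw [emb_sum σ μ ν.support ν κ hμ, hsupport,
            Finset.sum_image (fun s hs t ht hst => hinj hs ht hst)]
          refine Finset.sum_congr rfl fun s hs => ?_
          show ν s • emb σ (κ s) = ν' (σ, s.2) • emb σ (κ ((none : Option A), s.2))
          have h1 : ν' (σ, s.2) = ν s :=
            Finsupp.mapDomain_apply' ↑ν.support ν subset_rfl hinj hs
          have h2 : ((none : Option A), s.2) = s := by rw [← hfst s hs]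
          rw [h1, h2]
        rw [hsum]
        exact steps_one h0 ν' hmem _ hk

end Aux

/-- If `x ⇝^σ μ` then `(τ,x) ⇒_β ⟨σ,μ⟩`; moreover if `x ⇝^τ μ` then `(σ,x) ⇒_β ⟨σ,μ⟩`
for every `σ ∈ Σ_τ`. -/
theorem warrow_implies_steps {X A : Type*} (α : X → Set (Option A × PDist X)) :
    (∀ (σ : Option A) (x : X) (μ : PDist X),
      (∃ n, WArrow α n σ x μ) → ∃ n, Steps (beta α) n ((none : Option A), x) (emb σ μ)) ∧
    (∀ (x : X) (μ : PDist X), (∃ n, WArrow α n (none : Option A) x μ) →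
      ∀ σ : Option A, ∃ n, Steps (beta α) n (σ, x) (emb σ μ)) := by
  constructor
  · rintro σ x μ ⟨n, h⟩
    exact (main_ind α n).1 σ x μ h
  · rintro x μ ⟨n, h⟩ σ
    exact (main_ind α n).2 x μ h σ
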